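/- For every ordinal α with ω₁ ≤ α < ω₂, if g : ω₁ → α is a bijection, then the function f : ω₁ → Ord defined by f(β) = order type of g[β] is a canonical function for α. -/

import Mathlib

open ZFSet FirstOrder

namespace P746

/-! ## First-order language with membership and a wellordering predicate -/

/-- The language with two binary relation symbols: `∈` and a wellordering `<*`. -/
def L : FirstOrder.Language where
  Functions := fun _ => Empty
  Relations := fun n => match n with
    | 2 => Fin 2
    | _ => Empty

open Classical in
/-- The `L`-structure on (the members of) a ZF-set `M`, interpreting the first relation
as membership and the second as a given relation `r`. -/
def mStruc (M : ZFSet) (r : ZFSet → ZFSet → Prop) : L.Structure M.toSet where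
  funMap := fun f _ => f.elim
  RelMap := fun {n} => match n with
    | 0 => fun R _ => R.elim
    | 1 => fun R _ => R.elim
    | 2 => fun R v => if R = (0 : Fin 2) then ((v 0 : ZFSet) ∈ (v 1 : ZFSet)) else r (v 0) (v 1)
    | (_+3) => fun R _ => R.elim

/-- `X` is an elementary substructure of `(M, ∈, r)`: `X ⊆ M` and every first-order formula
with parameters from `X` holds in `X` iff it holds in `M`. -/
def ElemSub (M : ZFSet) (r : ZFSet → ZFSet → Prop) (X : ZFSet) : Prop :=
  ∃ h : X ⊆ M,
    ∀ (n : ℕ) (φ : L.Formula (Fin n)) (v : Fin n → X.toSet),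
      (letI := mStruc M r
       φ.Realize (fun i => (⟨(v i : ZFSet), h (v i).2⟩ : M.toSet))) ↔
      (letI := mStruc X r; φ.Realize v)

/-- `r` is a wellordering of the members of `S`. -/
def WOn (S : ZFSet) (r : ZFSet → ZFSet → Prop) : Prop :=
  IsWellOrder S.toSet (Subrel r S.toSet)

/-! ## Basic set-theoretic notions inside `ZFSet` -/

/-- `x` is a (von Neumann) ordinal: a transitive set of transitive sets. -/
def IsOrd (x : ZFSet) : Prop :=
  x.IsTransitive ∧ ∀ y ∈ x.toSet, ZFSet.IsTransitive y

/-- `w` is the first uncountable ordinal `ω₁`. -/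
def IsOmega1 (w : ZFSet) : Prop :=
  IsOrd w ∧ ¬ w.toSet.Countable ∧ ∀ y ∈ w.toSet, y.toSet.Countable

/-- The set `[x]^{<ω}` of finite subsets of `x`. -/
noncomputable def finPow (x : ZFSet) : ZFSet :=
  ZFSet.sep (fun a => a.toSet.Finite) x.powerset

/-- The set `[x]^n` of subsets of `x` of size `n`. -/
noncomputable def finPowCard (x : ZFSet) (n : ℕ) : ZFSet :=
  ZFSet.sep (fun a => a.toSet.Finite ∧ a.toSet.ncard = n) x.powerset

/-- `D^X_η`: the set of finite `a ⊆ η` such that `f(a) ∈ X` for every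
`f : [η]^{|a|} → ω₁` belonging to `X` (`w` stands for `ω₁`). -/
def Dset (w X η : ZFSet) : Set ZFSet :=
  {a | a ∈ finPow η ∧ ∀ f ∈ X.toSet, ZFSet.IsFunc (finPowCard η a.toSet.ncard) w f →
    ∀ v : ZFSet, ZFSet.pair a v ∈ f → v ∈ X}

/-- The Skolem hull of `X ∪ z` in `M` (with functions on `[η]^{<ω}`):
`X` together with all values `f(a)` for `f : [η]^{<ω} → M` in `X` and finite `a ⊆ z`. -/
def SkHull (M η X z : ZFSet) : Set ZFSet :=
  X.toSet ∪ {y | ∃ f ∈ X.toSet, ZFSet.IsFunc (finPow η) M f ∧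
    ∃ a : ZFSet, a ∈ finPow η ∧ a ⊆ z ∧ ZFSet.pair a y ∈ f}

/-- `x` is hereditarily of cardinality less than `κ`. -/
def HerLt (κ : Cardinal) (x : ZFSet) : Prop :=
  ZFSet.mem_wf.fix (C := fun _ => Prop)
    (fun y ih => Cardinal.mk y.toSet < κ ∧ ∀ z, ∀ h : z ∈ y, ih z h) x

/-- `H` is the collection `H(κ)` of sets hereditarily of cardinality `< κ`. -/
def IsHCard (κ : Cardinal) (H : ZFSet) : Prop :=
  ∀ x : ZFSet, x ∈ H ↔ HerLt κ x

/-! ## Clubs, stationarity and canonical functions on `ω₁` -/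

noncomputable def omega1 : Ordinal.{0} := (Cardinal.aleph 1).ord
noncomputable def omega2 : Ordinal.{0} := (Cardinal.aleph 2).ord

/-- `C` is a club (closed unbounded) subset of `ω₁`. -/
def IsClub (C : Set Ordinal.{0}) : Prop :=
  C ⊆ Set.Iio omega1 ∧
  (∀ o, o < omega1 → Order.IsSuccLimit o → (∀ b, b < o → ∃ c ∈ C, b ≤ c ∧ c < o) → o ∈ C) ∧
  (∀ b, b < omega1 → ∃ c ∈ C, b < c ∧ c < omega1)

/-- `S` is a stationary subset of `ω₁`. -/
def IsStat (S : Set Ordinal.{0}) : Prop :=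
  ∀ C, IsClub C → (S ∩ C).Nonempty

/-- `f ≤ g` on a club. -/
def BddOnClub (f g : Ordinal.{0} → Ordinal.{0}) : Prop :=
  ∃ C, IsClub C ∧ ∀ α ∈ C, f α ≤ g α

/-- `f < g` on a club. -/
def LtOnClub (f g : Ordinal.{0} → Ordinal.{0}) : Prop :=
  ∃ C, IsClub C ∧ ∀ α ∈ C, f α < g α

/-- `f` is a canonical function for `γ`: it is above every canonical function for every `β < γ`
(mod clubs), and minimally so.  (This is the standard recursive characterization of the
statement that the empty condition in `P(ω₁)/NS_{ω₁}` forces `j(f)(ω₁^V) = γ`.) -/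
def Canonical : Ordinal.{0} → (Ordinal.{0} → Ordinal.{0}) → Prop :=
  Ordinal.lt_wf.fix (C := fun _ => (Ordinal.{0} → Ordinal.{0}) → Prop)
    (fun γ ih f =>
      (∀ β, ∀ hβ : β < γ, ∀ g, ih β hβ g → LtOnClub g f) ∧
      ∀ h : Ordinal.{0} → Ordinal.{0},
        (∀ β, ∀ hβ : β < γ, ∀ g, ih β hβ g → LtOnClub g h) → BddOnClub f h)

/-- Every `f : ω₁ → ω₁` is bounded on a club by a canonical function for some `γ < ω₂`. -/
def Bounding : Prop :=
  ∀ f : Ordinal.{0} → Ordinal.{0}, (∀ α, α < omega1 → f α < omega1) →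
    ∃ γ, γ < omega2 ∧ ∃ g, Canonical γ g ∧ BddOnClub f g

/-- `o` is the order type of the set of ordinals `s`: there is a strictly increasing
enumeration of `s` indexed by the ordinals below `o`. -/
def IsOtypOf (o : Ordinal.{0}) (s : Set Ordinal.{0}) : Prop :=
  ∃ e : Ordinal.{0} → Ordinal.{0},
    (∀ i j, i < j → j < o → e i < e j) ∧
    (∀ i, i < o → e i ∈ s) ∧ ∀ x ∈ s, ∃ i, i < o ∧ e i = x

/-! ## Trees on `ω × ω` and `ω × Ord` (as sets of pairs of lists) -/

def IsTreeN (S : Set (List ℕ × List ℕ)) : Prop :=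
  ∀ p ∈ S, p.1.length = p.2.length ∧ ∀ n : ℕ, (p.1.take n, p.2.take n) ∈ S

def IsTreeO (T : Set (List ℕ × List Ordinal.{0})) : Prop :=
  ∀ p ∈ T, p.1.length = p.2.length ∧ ∀ n : ℕ, (p.1.take n, p.2.take n) ∈ T

/-- Projection of a tree on `ω × ω`. -/
def projN (S : Set (List ℕ × List ℕ)) : Set (ℕ → ℕ) :=
  {x | ∃ y : ℕ → ℕ, ∀ n : ℕ,
    (List.ofFn (fun i : Fin n => x i), List.ofFn (fun i : Fin n => y i)) ∈ S}

/-- Projection of a tree on `ω × Ord`. -/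
def projO (T : Set (List ℕ × List Ordinal.{0})) : Set (ℕ → ℕ) :=
  {x | ∃ y : ℕ → Ordinal.{0}, ∀ n : ℕ,
    (List.ofFn (fun i : Fin n => x i), List.ofFn (fun i : Fin n => y i)) ∈ T}

/-- Projection of the restricted tree `T ↾ (ω × α)`. -/
def projOBelow (T : Set (List ℕ × List Ordinal.{0})) (α : Ordinal.{0}) : Set (ℕ → ℕ) :=
  {x | ∃ y : ℕ → Ordinal.{0}, (∀ i, y i < α) ∧ ∀ n : ℕ,
    (List.ofFn (fun i : Fin n => x i), List.ofFn (fun i : Fin n => y i)) ∈ T}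

/-! ## Names, evaluation, and generic extensions -/

open Classical in
/-- Evaluation of a `P`-name `τ` by a filter `G`:
`val G τ = { val G σ : ∃ p ∈ G, (σ, p) ∈ τ }`, by recursion on rank. -/
noncomputable def val (G : ZFSet) : ZFSet → ZFSet :=
  WellFounded.fix (InvImage.wf ZFSet.rank Ordinal.lt_wf)
    (fun τ ih =>
      ZFSet.sUnion <| ZFSet.sep
        (fun y => ∃ z ∈ τ.toSet,
          if h : ∃ σ, ZFSet.rank σ < ZFSet.rank τ ∧ ∃ p ∈ G.toSet, z = ZFSet.pair σ p
          then y = {ih h.choose h.choose_spec.1}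
          else y = ∅)
        (ZFSet.powerset (ZFSet.sUnion (ZFSet.sUnion (ZFSet.sUnion τ)))))

/-- The universe is a generic extension `V[G]` of the transitive class `V` by the
partial order `(P, ≤)` (with `le` the set of pairs `(p,q)` with `p ≤ q`), `G ⊆ P`
a filter meeting every dense subset of `P` lying in `V`, and every set being the
value of a `P`-name in `V`. -/
def IsGenericExt (V : Set ZFSet) (P le G : ZFSet) : Prop :=
  (∀ x ∈ V, ∀ y, y ∈ x → y ∈ V) ∧ P ∈ V ∧ le ∈ V ∧
  (∀ p, p ∈ P → ZFSet.pair p p ∈ le) ∧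
  (∀ p q z, ZFSet.pair p q ∈ le → ZFSet.pair q z ∈ le → ZFSet.pair p z ∈ le) ∧
  (∀ p q, ZFSet.pair p q ∈ le → p ∈ P ∧ q ∈ P) ∧
  G ⊆ P ∧ G ≠ ∅ ∧
  (∀ p q, p ∈ G → q ∈ G → ∃ r, r ∈ G ∧ ZFSet.pair r p ∈ le ∧ ZFSet.pair r q ∈ le) ∧
  (∀ p q, p ∈ G → q ∈ P → ZFSet.pair p q ∈ le → q ∈ G) ∧
  (∀ D, D ∈ V → D ⊆ P → (∀ p, p ∈ P → ∃ q, q ∈ D ∧ ZFSet.pair q p ∈ le) →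
    ∃ q, q ∈ G ∧ q ∈ D) ∧
  (∀ x : ZFSet, ∃ τ, τ ∈ V ∧ x = val G τ)

/-- In the generic extension, the forcing added no new `ω`-sequences of ordinals;
i.e. `P` is `(ω, ∞)`-distributive. -/
def Distributive (V : Set ZFSet) : Prop :=
  ∀ f o : ZFSet, (o.IsTransitive ∧ ∀ y ∈ o.toSet, ZFSet.IsTransitive y) →
    ZFSet.IsFunc ZFSet.omega o f → f ∈ V

/-! ## Ultrafilters and completeness -/

/-- `U` is an ultrafilter on the set `S`. -/
def IsUltraOn (S U : ZFSet) : Prop :=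
  U ⊆ S.powerset ∧ S ∈ U ∧ (∅ : ZFSet) ∉ U ∧
  (∀ A B, A ∈ U → A ⊆ B → B ⊆ S → B ∈ U) ∧
  (∀ A B, A ∈ U → B ∈ U → A ∩ B ∈ U) ∧
  (∀ A, A ⊆ S → (A ∈ U ∨ ZFSet.sep (fun x => x ∉ A) S ∈ U))

/-- `U` is `γ`-complete with respect to families of members of `U` lying in `W`. -/
def CompleteOn (W : Set ZFSet) (γ : Cardinal.{1}) (S U : ZFSet) : Prop :=
  ∀ F, F ∈ W → F ≠ ∅ → F ⊆ U → Cardinal.mk F.toSet < γ →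
    ZFSet.sep (fun x => ∀ A ∈ F.toSet, x ∈ A) S ∈ U

/-! ## Internal finite sequences, trees and homogeneity -/

/-- The set `κ^{<ω}` of finite sequences from `κ` (functions `n → κ`, `n < ω`). -/
noncomputable def seqs (κ : ZFSet) : ZFSet :=
  ZFSet.sep (fun f => ∃ n, n ∈ ZFSet.omega ∧ ZFSet.IsFunc n κ f)
    (((κ ∪ ZFSet.omega).powerset.powerset).powerset)

/-- The set of functions `a → b` as a ZF-set. -/
noncomputable def funsZ (a b : ZFSet) : ZFSet :=
  ZFSet.sep (fun f => ZFSet.IsFunc a b f) (((a ∪ b).powerset.powerset).powerset)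

/-- Restriction of a (set-)function `f` to `m`. -/
noncomputable def restr (f m : ZFSet) : ZFSet :=
  ZFSet.sep (fun p => ∃ i v, i ∈ m ∧ p = ZFSet.pair i v) f

/-- `T` is a tree on `ω × κ`: a set of pairs of finite sequences of equal length,
closed under restriction. -/
def IsTreeZ (κ T : ZFSet) : Prop :=
  ∀ z, z ∈ T → ∃ n s t, n ∈ ZFSet.omega ∧ ZFSet.IsFunc n ZFSet.omega s ∧
    ZFSet.IsFunc n κ t ∧ z = ZFSet.pair s t ∧
    ∀ m, m ∈ n → ZFSet.pair (restr s m) (restr t m) ∈ T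

/-- `x ∈ p[T]`, computed in `W`: there is a branch witness `y ∈ W`. -/
def inProjZ (W : Set ZFSet) (κ T x : ZFSet) : Prop :=
  ∃ y, y ∈ W ∧ ZFSet.IsFunc ZFSet.omega κ y ∧
    ∀ n, n ∈ ZFSet.omega → ZFSet.pair (restr x n) (restr y n) ∈ T

/-- `x ∈ p[T ↾ (ω × A)]` where the branch takes values satisfying `Q`. -/
def inProjVal (κ T x : ZFSet) (Q : ZFSet → Prop) : Prop :=
  ∃ y, ZFSet.IsFunc ZFSet.omega κ y ∧ (∀ i v, ZFSet.pair i v ∈ y → Q v) ∧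
    ∀ n, n ∈ ZFSet.omega → ZFSet.pair (restr x n) (restr y n) ∈ T

/-- The tower `⟨π(x ↾ k) : k < ω⟩` is countably complete, relativized to `W`. -/
def CCTower (W : Set ZFSet) (κ π x : ZFSet) : Prop :=
  ∀ Af, Af ∈ W → ZFSet.IsFunc ZFSet.omega ((seqs κ).powerset) Af →
    (∀ n U a, n ∈ ZFSet.omega → ZFSet.pair (restr x n) U ∈ π →
      ZFSet.pair n a ∈ Af → a ∈ U) →
    ∃ y, y ∈ W ∧ ZFSet.IsFunc ZFSet.omega κ y ∧
      ∀ n a, n ∈ ZFSet.omega → ZFSet.pair n a ∈ Af → restr y n ∈ a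

/-- `(T, π)` is a `γ`-homogeneous tree system on `ω × κ`, relativized to the class `W`. -/
def HomSys (W : Set ZFSet) (γ : Cardinal.{1}) (κ T π : ZFSet) : Prop :=
  IsTreeZ κ T ∧
  (∀ z, z ∈ π → ∃ n s U, n ∈ ZFSet.omega ∧ ZFSet.IsFunc n ZFSet.omega s ∧
    z = ZFSet.pair s U ∧ IsUltraOn (funsZ n κ) U ∧ CompleteOn W γ (funsZ n κ) U ∧
    ZFSet.sep (fun t => ZFSet.pair s t ∈ T) (funsZ n κ) ∈ U) ∧
  (∀ s U U', ZFSet.pair s U ∈ π → ZFSet.pair s U' ∈ π → U = U') ∧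
  (∀ x, x ∈ W → ZFSet.IsFunc ZFSet.omega ZFSet.omega x →
    (inProjZ W κ T x ↔
      ((∀ n, n ∈ ZFSet.omega → ∃ U, ZFSet.pair (restr x n) U ∈ π) ∧ CCTower W κ π x)))

/-- `A` is a `γ`-homogeneously Suslin set of reals, in the sense of the class `W`. -/
def HomSuslinIn (W : Set ZFSet) (γ : Cardinal.{1}) (A : ZFSet) : Prop :=
  A ⊆ funsZ ZFSet.omega ZFSet.omega ∧
  ∃ κ T π, κ ∈ W ∧ T ∈ W ∧ π ∈ W ∧
    (κ.IsTransitive ∧ ∀ y ∈ κ.toSet, ZFSet.IsTransitive y) ∧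
    HomSys W γ κ T π ∧
    ∀ x, ZFSet.IsFunc ZFSet.omega ZFSet.omega x → (x ∈ A ↔ inProjZ W κ T x)


/-! ## Additional notions -/

/-- `γ` is a regular (limit) cardinal, as a ZF-set ordinal: the range of any function
from a smaller ordinal into `γ` is bounded. -/
def IsRegOrd (γ : ZFSet) : Prop :=
  IsOrd γ ∧ (∀ o ∈ γ.toSet, ∃ o' ∈ γ.toSet, o ∈ o') ∧
  ∀ b f, b ∈ γ → ZFSet.IsFunc b γ f → ∃ o ∈ γ.toSet, ∀ x v, ZFSet.pair x v ∈ f → v ∈ o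

/-- `Y` is a minimal `(η, λ)`-extension of `X` (inside the model `M` with wellordering `r`):
`Y ≺ M`, `Y ∩ η = X ∩ η`, and `Y` is the Skolem hull of `X ∪ A` for some `A ⊆ λ`. -/
def IsMinExt (M : ZFSet) (r : ZFSet → ZFSet → Prop) (η lam X Y : ZFSet) : Prop :=
  ElemSub M r Y ∧ Y ∩ η = X ∩ η ∧ ∃ A : ZFSet, A ⊆ lam ∧ Y.toSet = SkHull M lam X A

/-- `U` is a normal measure on the (measurable) cardinal `λ`. -/
def IsNormalMeasure (lam U : ZFSet) : Prop :=
  IsOrd lam ∧ IsUltraOn lam U ∧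
  CompleteOn Set.univ (Cardinal.mk lam.toSet) lam U ∧
  (∀ x, x ∈ lam → ({x} : ZFSet) ∉ U) ∧
  ∀ f A, A ∈ U → ZFSet.IsFunc lam lam f →
    (∀ x v, x ∈ A → ZFSet.pair x v ∈ f → (v ∈ x ∨ x = ∅)) →
    ∃ B c, B ∈ U ∧ ∀ x, x ∈ B → ZFSet.pair x c ∈ f

/-- `g` is the `ξ`-th ordinal of `M` (counting from `0`): the ordinals of `M` below `g`
have order type `ξ`. -/
def NthOrdOf (M : ZFSet) (ξ : Ordinal.{0}) (g : ZFSet) : Prop :=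
  IsOrd g ∧ g ∈ M ∧
  IsOtypOf ξ (ZFSet.rank '' {x : ZFSet | x ∈ M.toSet ∧ IsOrd x ∧ x ∈ g})

/-- The relation `≤_o` on a tree `T` on `ω × ω₁`: one sequence extends the other, and
the first coordinate of the last element of the longer one codes that the length of the
first is below the length of the second in the coded ordering.  (`decode k m n` means:
the value `k` codes `m` before `n`.) -/
def leO (T : Set (List ℕ × List Ordinal.{0})) (decode : ℕ → ℕ → ℕ → Prop)
    (p q : List ℕ × List Ordinal.{0}) : Prop :=
  p ∈ T ∧ q ∈ T ∧
  ((p.1 <+: q.1 ∧ p.2 <+: q.2 ∧ p.1.length < q.1.length ∧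
      decode (q.1.getD (q.1.length - 1) 0) p.1.length q.1.length) ∨
   (q.1 <+: p.1 ∧ q.2 <+: p.2 ∧ q.1.length < p.1.length ∧
      decode (p.1.getD (p.1.length - 1) 0) p.1.length q.1.length))

/-- The binary relation on `ω` coded by `x : ω → ω`:  comparisons of `n` with smaller
numbers are decided by `x (n - 1)`. -/
def codedRel (decode : ℕ → ℕ → ℕ → Prop) (x : ℕ → ℕ) (m n : ℕ) : Prop :=
  (m < n ∧ decode (x (n - 1)) m n) ∨ (n < m ∧ decode (x (m - 1)) m n)



/-! ## Auxiliary development -/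

section Aux

open Set

noncomputable section

lemma omega1_isLimit : Order.IsSuccLimit omega1 :=
  Cardinal.isSuccLimit_ord (Cardinal.aleph0_le_aleph 1)

lemma succ_lt_omega1 {a : Ordinal.{0}} (ha : a < omega1) : a + 1 < omega1 := by
  rw [Ordinal.add_one_eq_succ]
  exact omega1_isLimit.succ_lt ha

lemma countable_Iio {x : Ordinal.{0}} (hx : x < omega1) : Countable ↥(Set.Iio x) := by
  rw [Set.countable_coe_iff, Cardinal.countable_iff_lt_aleph_one, Ordinal.mk_Iio_ordinal,
    Cardinal.lift_lt_aleph_one]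
  exact Cardinal.lt_ord.1 hx

lemma cof_omega1 : omega1.cof = Cardinal.aleph 1 :=
  Cardinal.isRegular_aleph_one.cof_eq

lemma mk_nat_lt_cof : (Cardinal.mk ℕ) < omega1.cof := by
  rw [cof_omega1, Cardinal.mk_nat]
  exact Cardinal.aleph0_lt_aleph_one

/-- Build an increasing `ω`-sequence through prescribed step-sets. -/
lemma exists_seq (b : Ordinal.{0}) (hb : b < omega1)
    (T : ℕ → Ordinal.{0} → Set Ordinal.{0})
    (hT : ∀ n x, x < omega1 → ∃ y, y ∈ T n x ∧ x < y ∧ y < omega1) :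
    ∃ u : ℕ → Ordinal.{0}, u 0 = b ∧ StrictMono u ∧ (∀ n, u n < omega1) ∧
      (∀ n, u (n + 1) ∈ T n (u n)) ∧ (⨆ n, u n) < omega1 ∧ Order.IsSuccLimit (⨆ n, u n) ∧
      (∀ n, u n < ⨆ n, u n) := by
  classical
  let F : ℕ → Ordinal.{0} → Ordinal.{0} := fun n x =>
    if hx : x < omega1 then (hT n x hx).choose else 0
  let u : ℕ → Ordinal.{0} := fun n => Nat.rec b (fun m xm => F m xm) n
  have hu0 : u 0 = b := rfl
  have hus : ∀ n, u (n + 1) = F n (u n) := fun _ => rfl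
  have hlt : ∀ n, u n < omega1 := by
    intro n
    induction n with
    | zero => exact hb
    | succ m ih =>
      rw [hus m]
      simp only [F, dif_pos ih]
      exact (hT m (u m) ih).choose_spec.2.2
  have hstep : ∀ n, u (n + 1) ∈ T n (u n) ∧ u n < u (n + 1) := by
    intro n
    have := (hT n (u n) (hlt n)).choose_spec
    rw [hus n]
    simp only [F, dif_pos (hlt n)]
    exact ⟨this.1, this.2.1⟩
  have hmono : StrictMono u := strictMono_nat_of_lt_succ fun n => (hstep n).2
  have hsup : (⨆ n, u n) < omega1 := Ordinal.iSup_lt_ord mk_nat_lt_cof hlt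
  have hlub : ∀ n, u n < ⨆ n, u n :=
    fun n => lt_of_lt_of_le (hstep n).2 (Ordinal.le_iSup u (n + 1))
  refine ⟨u, hu0, hmono, hlt, fun n => (hstep n).1, hsup,
    Ordinal.isSuccLimit_iff.2 ⟨?_, Order.isSuccPrelimit_of_succ_lt ?_⟩, hlub⟩
  · intro h0
    exact absurd (h0 ▸ hlub 0) not_lt_zero
  · intro a ha
    obtain ⟨n, hn⟩ := Ordinal.lt_iSup_iff.1 ha
    exact lt_of_le_of_lt (Order.succ_le_of_lt hn) (hlub n)

lemma isClub_Iio : IsClub (Set.Iio omega1) := by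
  refine ⟨fun _ h => h, fun o ho _ _ => ho, fun b hb => ?_⟩
  exact ⟨b + 1, succ_lt_omega1 hb, by
    rw [Ordinal.add_one_eq_succ]; exact Order.lt_succ b, succ_lt_omega1 hb⟩

lemma isClub_tail {a : Ordinal.{0}} (ha : a < omega1) :
    IsClub {β | a < β ∧ β < omega1} := by
  refine ⟨fun β hβ => hβ.2, ?_, ?_⟩
  · intro o ho holim hcof
    obtain ⟨c, hc, _, hco⟩ := hcof 0 holim.pos
    exact ⟨hc.1.trans hco, ho⟩
  · intro b hb
    have hm : max a b < omega1 := max_lt ha hb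
    refine ⟨max a b + 1, ⟨?_, succ_lt_omega1 hm⟩, ?_, succ_lt_omega1 hm⟩
    · calc a ≤ max a b := le_max_left a b
        _ < max a b + 1 := by
          rw [Ordinal.add_one_eq_succ]; exact Order.lt_succ _
    · calc b ≤ max a b := le_max_right a b
        _ < max a b + 1 := by
          rw [Ordinal.add_one_eq_succ]; exact Order.lt_succ _

lemma isClub_iInter {ι : Sort*} [Countable ι] (C : ι → Set Ordinal.{0})
    (h : ∀ i, IsClub (C i)) : IsClub {β | β < omega1 ∧ ∀ i, β ∈ C i} := by
  refine ⟨fun β hβ => hβ.1, ?_, ?_⟩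
  · intro o ho holim hcof
    refine ⟨ho, fun i => ?_⟩
    refine (h i).2.1 o ho holim fun b hb => ?_
    obtain ⟨c, hc, hbc, hco⟩ := hcof b hb
    exact ⟨c, hc.2 i, hbc, hco⟩
  · intro b hb
    rcases isEmpty_or_nonempty ι with hι | hι
    · exact ⟨b + 1, ⟨succ_lt_omega1 hb, fun i => hι.elim i⟩, by
        rw [Ordinal.add_one_eq_succ]; exact Order.lt_succ b, succ_lt_omega1 hb⟩
    · obtain ⟨e, he⟩ := exists_surjective_nat ι
      set idx : ℕ → ι := fun n => e (Nat.unpair n).1 with hidx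
      obtain ⟨u, hu0, hmono, hlt, hstep, hsup, hlim, hlub⟩ :=
        exists_seq b hb (fun n x => C (idx n))
          (fun n x hx => by
            obtain ⟨c, hc, hxc, hcw⟩ := (h (idx n)).2.2 x hx
            exact ⟨c, hc, hxc, hcw⟩)
      refine ⟨⨆ n, u n, ⟨hsup, fun i => ?_⟩, hu0 ▸ hlub 0, hsup⟩
      refine (h i).2.1 _ hsup hlim fun b' hb' => ?_
      obtain ⟨n₀, hn₀⟩ := Ordinal.lt_iSup_iff.1 hb'
      obtain ⟨k, hk⟩ := he i
      have hidxeq : idx (Nat.pair k n₀) = i := by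
        simp only [hidx, Nat.unpair_pair, hk]
      refine ⟨u (Nat.pair k n₀ + 1), ?_, ?_, hlub _⟩
      · rw [← hidxeq]; exact hstep (Nat.pair k n₀)
      · refine le_of_lt (lt_of_lt_of_le hn₀ (hmono.monotone ?_))
        exact le_trans (Nat.right_le_pair k n₀) (Nat.le_succ _)

lemma IsClub.inter {C D : Set Ordinal.{0}} (hC : IsClub C) (hD : IsClub D) :
    IsClub (C ∩ D) := by
  have h := isClub_iInter (ι := Bool) (fun b => bif b then C else D)
    (fun b => by cases b <;> simpa)
  have hEq : {β | β < omega1 ∧ ∀ i : Bool, β ∈ (bif i then C else D)} = C ∩ D := by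
    ext β
    constructor
    · intro ⟨_, hall⟩
      exact ⟨hall true, hall false⟩
    · intro ⟨h1, h2⟩
      exact ⟨hC.1 h1, fun i => by cases i <;> simpa⟩
  rwa [hEq] at h

lemma isClub_diag (D : Ordinal.{0} → Set Ordinal.{0})
    (h : ∀ γ, γ < omega1 → IsClub (D γ)) :
    IsClub {β | β < omega1 ∧ ∀ γ, γ < β → β ∈ D γ} := by
  refine ⟨fun β hβ => hβ.1, ?_, ?_⟩
  · intro o ho holim hcof
    refine ⟨ho, fun γ hγ => ?_⟩
    refine (h γ (hγ.trans ho)).2.1 o ho holim fun b hb => ?_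
    have hγ1 : γ + 1 < o := by
      rw [Ordinal.add_one_eq_succ]; exact holim.succ_lt hγ
    obtain ⟨c, hc, hbc, hco⟩ := hcof (max (γ + 1) b) (max_lt hγ1 hb)
    have hγc : γ < c := by
      have : γ + 1 ≤ c := le_trans (le_max_left _ _) hbc
      rw [Ordinal.add_one_eq_succ] at this
      exact lt_of_lt_of_le (Order.lt_succ γ) this
    exact ⟨c, hc.2 γ hγc, le_trans (le_max_right _ _) hbc, hco⟩
  · intro b hb
    have hE : ∀ x, x < omega1 →
        IsClub {β | β < omega1 ∧ ∀ γ : ↥(Set.Iio x), β ∈ D γ.1} := by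
      intro x hx
      have : Countable ↥(Set.Iio x) := countable_Iio hx
      exact isClub_iInter _ (fun γ => h γ.1 (γ.2.trans hx))
    obtain ⟨u, hu0, hmono, hlt, hstep, hsup, hlim, hlub⟩ :=
      exists_seq b hb (fun n x => {β | β < omega1 ∧ ∀ γ : ↥(Set.Iio x), β ∈ D γ.1})
        (fun n x hx => by
          obtain ⟨c, hc, hxc, hcw⟩ := (hE x hx).2.2 x hx
          exact ⟨c, hc, hxc, hcw⟩)
    refine ⟨⨆ n, u n, ⟨hsup, fun γ hγ => ?_⟩, hu0 ▸ hlub 0, hsup⟩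
    obtain ⟨n, hn⟩ := Ordinal.lt_iSup_iff.1 hγ
    refine (h γ (hγ.trans hsup)).2.1 _ hsup hlim fun b' hb' => ?_
    obtain ⟨n₀, hn₀⟩ := Ordinal.lt_iSup_iff.1 hb'
    set m := max n n₀ with hm
    refine ⟨u (m + 1), ?_, ?_, hlub _⟩
    · have := hstep m
      exact this.2 ⟨γ, lt_of_lt_of_le hn (hmono.monotone (le_max_left n n₀))⟩
    · exact le_of_lt (lt_of_lt_of_le hn₀
        (hmono.monotone (le_trans (le_max_right n n₀) (Nat.le_succ m))))

/-! ### Club-equality and canonical function basics -/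

def EqOnClub (f f' : Ordinal.{0} → Ordinal.{0}) : Prop :=
  ∃ C, IsClub C ∧ ∀ β ∈ C, f β = f' β

lemma EqOnClub.symm {f f' : Ordinal.{0} → Ordinal.{0}} (h : EqOnClub f f') :
    EqOnClub f' f := by
  obtain ⟨C, hC, he⟩ := h
  exact ⟨C, hC, fun β hβ => (he β hβ).symm⟩

lemma LtOnClub.congr_left {g g' f : Ordinal.{0} → Ordinal.{0}}
    (h : LtOnClub g f) (he : EqOnClub g g') : LtOnClub g' f := by
  obtain ⟨C, hC, hlt⟩ := h
  obtain ⟨C', hC', heq⟩ := he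
  refine ⟨C ∩ C', hC.inter hC', fun x hx => ?_⟩
  rw [← heq x hx.2]
  exact hlt x hx.1

lemma LtOnClub.congr_right {g f f' : Ordinal.{0} → Ordinal.{0}}
    (h : LtOnClub g f) (he : EqOnClub f f') : LtOnClub g f' := by
  obtain ⟨C, hC, hlt⟩ := h
  obtain ⟨C', hC', heq⟩ := he
  refine ⟨C ∩ C', hC.inter hC', fun x hx => ?_⟩
  rw [← heq x hx.2]
  exact hlt x hx.1

lemma BddOnClub.congr_left {f f' h : Ordinal.{0} → Ordinal.{0}}
    (hb : BddOnClub f h) (he : EqOnClub f f') : BddOnClub f' h := by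
  obtain ⟨C, hC, hle⟩ := hb
  obtain ⟨C', hC', heq⟩ := he
  refine ⟨C ∩ C', hC.inter hC', fun x hx => ?_⟩
  rw [← heq x hx.2]
  exact hle x hx.1

lemma canonical_def (γ : Ordinal.{0}) (f : Ordinal.{0} → Ordinal.{0}) :
    Canonical γ f ↔
      ((∀ β, ∀ _ : β < γ, ∀ g, Canonical β g → LtOnClub g f) ∧
       ∀ h : Ordinal.{0} → Ordinal.{0},
         (∀ β, ∀ _ : β < γ, ∀ g, Canonical β g → LtOnClub g h) → BddOnClub f h) := by
  unfold Canonical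
  rw [WellFounded.fix_eq]

lemma canonical_unique {γ : Ordinal.{0}} {f f' : Ordinal.{0} → Ordinal.{0}}
    (hf : Canonical γ f) (hf' : Canonical γ f') : EqOnClub f f' := by
  rw [canonical_def] at hf hf'
  obtain ⟨C, hC, h1⟩ := hf'.2 f hf.1
  obtain ⟨C', hC', h2⟩ := hf.2 f' hf'.1
  exact ⟨C ∩ C', hC.inter hC',
    fun β hβ => le_antisymm (h2 β hβ.2) (h1 β hβ.1)⟩

lemma canonical_congr {γ : Ordinal.{0}} {f f' : Ordinal.{0} → Ordinal.{0}}
    (he : EqOnClub f f') (hf : Canonical γ f) : Canonical γ f' := by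
  rw [canonical_def] at hf ⊢
  refine ⟨fun β hβ g hg => (hf.1 β hβ g hg).congr_right he, fun k hk => ?_⟩
  exact (hf.2 k hk).congr_left he

/-! ### Order types of sets of ordinals -/

/-- The order type of a set of ordinals, as an `Ordinal.{1}`. -/
noncomputable def OTl (s : Set Ordinal.{0}) : Ordinal.{1} :=
  Ordinal.type (Subrel ((· < ·) : Ordinal.{0} → Ordinal.{0} → Prop) (· ∈ s))

lemma OTl_Iio (b : Ordinal.{0}) : OTl (Set.Iio b) = Ordinal.lift.{1} b := by
  unfold OTl
  rw [← Ordinal.typein_ordinal b]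
  exact Ordinal.type_subrel _ _

lemma OTl_mono {s t : Set Ordinal.{0}} (h : s ⊆ t) : OTl s ≤ OTl t := by
  unfold OTl
  rw [Ordinal.type_le_iff']
  exact ⟨⟨⟨Set.inclusion h, Set.inclusion_injective h⟩, Iff.rfl⟩⟩

lemma OTl_inter_Iio {s : Set Ordinal.{0}} {x : Ordinal.{0}} (hx : x ∈ s) :
    OTl (s ∩ Set.Iio x) =
      Ordinal.typein (Subrel ((· < ·) : Ordinal.{0} → Ordinal.{0} → Prop) (· ∈ s)) ⟨x, hx⟩ := by
  rw [← Ordinal.type_subrel]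
  unfold OTl
  refine RelIso.ordinal_type_eq ?_
  exact ⟨⟨fun a => ⟨⟨a.1, a.2.1⟩, a.2.2⟩, fun b => ⟨b.1.1, b.1.2, b.2⟩,
    fun _ => rfl, fun _ => rfl⟩, Iff.rfl⟩

lemma OTl_lt_of_mem {s : Set Ordinal.{0}} {x : Ordinal.{0}} (hx : x ∈ s) :
    OTl (s ∩ Set.Iio x) < OTl s := by
  rw [OTl_inter_Iio hx]
  exact Ordinal.typein_lt_type _ _

lemma OTl_le_of_forall {s : Set Ordinal.{0}} {c : Ordinal.{1}}
    (h : ∀ x, ∀ _ : x ∈ s, OTl (s ∩ Set.Iio x) < c) : OTl s ≤ c := by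
  by_contra hc
  push_neg at hc
  rw [show OTl s = Ordinal.type (Subrel ((· < ·) : Ordinal.{0} → Ordinal.{0} → Prop) (· ∈ s))
    from rfl] at hc
  obtain ⟨x, hx⟩ :=
    Ordinal.typein_surj (Subrel ((· < ·) : Ordinal.{0} → Ordinal.{0} → Prop) (· ∈ s)) hc
  have h2 := h x.1 x.2
  rw [OTl_inter_Iio x.2] at h2
  rw [hx] at h2
  exact absurd h2 (lt_irrefl c)

lemma IsOtypOf.otl {o : Ordinal.{0}} {s : Set Ordinal.{0}} (h : IsOtypOf o s) :
    OTl s = Ordinal.lift.{1} o := by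
  obtain ⟨e, hmono, hmem, hsur⟩ := h
  rw [← OTl_Iio o]
  have f : Subrel ((· < ·) : Ordinal.{0} → Ordinal.{0} → Prop) (· ∈ Set.Iio o) ≃r
      Subrel ((· < ·) : Ordinal.{0} → Ordinal.{0} → Prop) (· ∈ s) := by
    refine RelIso.ofSurjective ⟨⟨fun i => ⟨e i.1, hmem i.1 i.2⟩, ?_⟩, ?_⟩ ?_
    · intro i j hij
      have hij' : e i.1 = e j.1 := congrArg Subtype.val hij
      rcases lt_trichotomy i.1 j.1 with hlt | heq | hgt
      · exact absurd (hij' ▸ hmono i.1 j.1 hlt j.2) (lt_irrefl _)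
      · exact Subtype.ext heq
      · exact absurd (hij' ▸ hmono j.1 i.1 hgt i.2) (lt_irrefl _)
    · intro a b
      constructor
      · intro hab
        have hab2 : e a.1 < e b.1 := hab
        rcases lt_trichotomy a.1 b.1 with hlt | heq | hgt
        · exact hlt
        · exact absurd (heq ▸ hab2) (lt_irrefl _)
        · exact absurd hab2 (asymm (hmono b.1 a.1 hgt a.2))
      · intro hab
        exact hmono a.1 b.1 hab b.2
    · intro y
      obtain ⟨i, hi, hei⟩ := hsur y.1 y.2
      exact ⟨⟨i, hi⟩, Subtype.ext hei⟩
  exact (show OTl (Set.Iio o) = OTl s from f.ordinal_type_eq).symm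

open Classical in
/-- The order type of a set of ordinals, as an `Ordinal.{0}` (meaningful for bounded sets). -/
noncomputable def OT (s : Set Ordinal.{0}) : Ordinal.{0} :=
  if h : ∃ o : Ordinal.{0}, Ordinal.lift.{1} o = OTl s then h.choose else 0

lemma OT_spec {s : Set Ordinal.{0}} {b : Ordinal.{0}} (hs : s ⊆ Set.Iio b) :
    Ordinal.lift.{1} (OT s) = OTl s := by
  have hle : OTl s ≤ Ordinal.lift.{1} b := by
    rw [← OTl_Iio]
    exact OTl_mono hs
  have h : ∃ o : Ordinal.{0}, Ordinal.lift.{1} o = OTl s :=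
    Ordinal.mem_range_lift_of_le hle
  unfold OT
  rw [dif_pos h]
  exact h.choose_spec

lemma OT_Iio (b : Ordinal.{0}) : OT (Set.Iio b) = b := by
  have := OT_spec (s := Set.Iio b) (b := b) (fun x hx => hx)
  rw [OTl_Iio] at this
  exact Ordinal.lift_inj.1 this

lemma Iic_eq_Iio_succ (b : Ordinal.{0}) : Set.Iic b = Set.Iio (b + 1) := by
  ext x
  rw [Set.mem_Iic, Set.mem_Iio, Ordinal.add_one_eq_succ, Order.lt_succ_iff]

lemma OT_Iic (b : Ordinal.{0}) : OT (Set.Iic b) = b + 1 := by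
  rw [Iic_eq_Iio_succ, OT_Iio]

lemma OT_mono {s t : Set Ordinal.{0}} {b : Ordinal.{0}} (h : s ⊆ t)
    (ht : t ⊆ Set.Iio b) : OT s ≤ OT t := by
  rw [← Ordinal.lift_le.{1}, OT_spec (h.trans ht), OT_spec ht]
  exact OTl_mono h

lemma OT_lt_of_mem {s : Set Ordinal.{0}} {x b : Ordinal.{0}} (hx : x ∈ s)
    (hs : s ⊆ Set.Iio b) : OT (s ∩ Set.Iio x) < OT s := by
  rw [← Ordinal.lift_lt.{1}, OT_spec ((Set.inter_subset_left).trans hs), OT_spec hs]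
  exact OTl_lt_of_mem hx

lemma OT_le_of_forall {s : Set Ordinal.{0}} {b c : Ordinal.{0}} (hs : s ⊆ Set.Iio b)
    (h : ∀ x, ∀ _ : x ∈ s, OT (s ∩ Set.Iio x) < c) : OT s ≤ c := by
  rw [← Ordinal.lift_le.{1}, OT_spec hs]
  refine OTl_le_of_forall fun x hx => ?_
  rw [← OT_spec ((Set.inter_subset_left (t := Set.Iio x)).trans hs)]
  exact Ordinal.lift_lt.2 (h x hx)

lemma OT_eq_of_isOtypOf {o : Ordinal.{0}} {s : Set Ordinal.{0}} {b : Ordinal.{0}}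
    (h : IsOtypOf o s) (hs : s ⊆ Set.Iio b) : OT s = o := by
  rw [← Ordinal.lift_inj.{1}, OT_spec hs, h.otl]

/-! ### Canonical functions for countable ordinals -/

lemma canonical_const : ∀ ξ, ξ < omega1 → Canonical ξ (fun _ => ξ) := by
  intro ξ
  induction ξ using Ordinal.induction with
  | h ξ IH =>
  intro hξ
  rw [canonical_def]
  constructor
  · intro β hβ g hg
    have hβ1 : β < omega1 := hβ.trans hξ
    obtain ⟨C, hC, hCe⟩ := canonical_unique hg (IH β hβ hβ1)
    exact ⟨C, hC, fun x hx => by rw [hCe x hx]; exact hβ⟩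
  · intro h hh
    rcases eq_or_ne ξ 0 with hξ0 | hξ0
    · exact ⟨Set.Iio omega1, isClub_Iio, fun x _ => by rw [hξ0]; exact zero_le⟩
    · have hCex : ∀ β : ↥(Set.Iio ξ), ∃ C, IsClub C ∧ ∀ x ∈ C, β.1 < h x :=
        fun β => hh β.1 β.2 _ (IH β.1 β.2 (β.2.trans hξ))
      choose C hC1 hC2 using hCex
      have : Countable ↥(Set.Iio ξ) := countable_Iio hξ
      refine ⟨_, isClub_iInter C hC1, ?_⟩
      intro x hx
      by_contra hlt
      push_neg at hlt
      exact absurd (hC2 ⟨h x, hlt⟩ x (hx.2 _)) (lt_irrefl _)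

/-! ### The main induction -/

lemma main_canonical (α : Ordinal.{0}) (h1 : omega1 ≤ α)
    (g : Ordinal.{0} → Ordinal.{0})
    (hmaps : ∀ β, β < omega1 → g β < α)
    (hsurj : ∀ ξ, ξ < α → ∃ β, β < omega1 ∧ g β = ξ) :
    ∀ ξ, ξ ≤ α → omega1 ≤ ξ →
      Canonical ξ (fun β => OT (g '' Set.Iio β ∩ Set.Iio ξ)) := by
  have hbound : ∀ β ζ, β < omega1 → g '' Set.Iio β ∩ Set.Iio ζ ⊆ Set.Iio α := by
    intro β ζ hβ x hx
    obtain ⟨⟨γ, hγ, rfl⟩, _⟩ := hx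
    exact hmaps γ (hγ.trans hβ)
  intro ξ
  induction ξ using Ordinal.induction with
  | h ξ IH =>
  intro hξα hωξ
  rw [canonical_def]
  constructor
  · -- every canonical function for ζ < ξ is dominated on a club
    intro ζ hζ w hw
    by_cases hζω : ζ < omega1
    · -- ζ countable: `w` agrees with the constant ζ on a club
      obtain ⟨Ceq, hCeq, heq⟩ := canonical_unique (canonical_const ζ hζω) hw
      refine LtOnClub.congr_left ?_ ⟨Ceq, hCeq, heq⟩
      -- const ζ < F ξ on a tail club
      have hη : ∀ η : ↥(Set.Iic ζ), ∃ β, β < omega1 ∧ g β = η.1 :=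
        fun η => hsurj η.1 (lt_of_le_of_lt η.2 (lt_of_lt_of_le hζω h1))
      choose χ hχ1 hχ2 using hη
      have hcnt : Countable ↥(Set.Iic ζ) := by
        rw [Iic_eq_Iio_succ]
        exact countable_Iio (succ_lt_omega1 hζω)
      obtain ⟨e, he⟩ := exists_surjective_nat ↥(Set.Iic ζ)
      have hβ₀lt : (⨆ n, χ (e n)) < omega1 :=
        Ordinal.iSup_lt_ord mk_nat_lt_cof (fun n => hχ1 (e n))
      refine ⟨{β | (⨆ n, χ (e n)) < β ∧ β < omega1}, isClub_tail hβ₀lt, ?_⟩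
      intro x hx
      have hsub : Set.Iic ζ ⊆ g '' Set.Iio x ∩ Set.Iio ξ := by
        intro η hη'
        refine ⟨⟨χ ⟨η, hη'⟩, ?_, hχ2 ⟨η, hη'⟩⟩, ?_⟩
        · obtain ⟨n, hn⟩ := he ⟨η, hη'⟩
          have : χ ⟨η, hη'⟩ ≤ ⨆ n, χ (e n) := by
            rw [← hn]
            exact Ordinal.le_iSup (fun n => χ (e n)) n
          exact lt_of_le_of_lt this hx.1
        · exact lt_of_le_of_lt hη' (lt_of_lt_of_le hζω hωξ)
      calc ζ < ζ + 1 := by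
              rw [Ordinal.add_one_eq_succ]; exact Order.lt_succ ζ
        _ = OT (Set.Iic ζ) := (OT_Iic ζ).symm
        _ ≤ OT (g '' Set.Iio x ∩ Set.Iio ξ) := OT_mono hsub (hbound x ξ hx.2)
    · -- ζ uncountable: `w` agrees with `F ζ` on a club
      push_neg at hζω
      obtain ⟨Ceq, hCeq, heq⟩ :=
        canonical_unique (IH ζ hζ (hζ.le.trans hξα) hζω) hw
      refine LtOnClub.congr_left ?_ ⟨Ceq, hCeq, heq⟩
      obtain ⟨β₀, hβ₀, hgβ₀⟩ := hsurj ζ (hζ.trans_le hξα)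
      refine ⟨{β | β₀ < β ∧ β < omega1}, isClub_tail hβ₀, ?_⟩
      intro x hx
      have hmem : ζ ∈ g '' Set.Iio x ∩ Set.Iio ξ := ⟨⟨β₀, hx.1, hgβ₀⟩, hζ⟩
      have hset : g '' Set.Iio x ∩ Set.Iio ξ ∩ Set.Iio ζ =
          g '' Set.Iio x ∩ Set.Iio ζ := by
        ext y
        constructor
        · rintro ⟨⟨hy1, _⟩, hy3⟩
          exact ⟨hy1, hy3⟩
        · rintro ⟨hy1, hy2⟩
          exact ⟨⟨hy1, Set.mem_Iio.2 ((Set.mem_Iio.1 hy2).trans hζ)⟩, hy2⟩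
      have hlt := OT_lt_of_mem hmem (hbound x ξ hx.2)
      rw [hset] at hlt
      exact hlt
  · -- minimality via a diagonal intersection
    intro h hh
    classical
    have hCex : ∀ γ, γ < omega1 → ∃ C, IsClub C ∧
        (g γ < ξ → ∀ β ∈ C, β < omega1 →
          OT (g '' Set.Iio β ∩ Set.Iio (g γ)) < h β) := by
      intro γ hγ
      by_cases hgξ : g γ < ξ
      · by_cases hgγ : g γ < omega1
        · obtain ⟨C, hC1, hC2⟩ := hh (g γ) hgξ _ (canonical_const (g γ) hgγ)
          refine ⟨C, hC1, fun _ β hβ hβω => ?_⟩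
          calc OT (g '' Set.Iio β ∩ Set.Iio (g γ)) ≤ OT (Set.Iio (g γ)) := by
                refine OT_mono (b := α) Set.inter_subset_right fun y hy => ?_
                exact Set.mem_Iio.2
                  (lt_of_lt_of_le (lt_of_lt_of_le (Set.mem_Iio.1 hy) hgγ.le) h1)
            _ = g γ := OT_Iio _
            _ < h β := hC2 β hβ
        · push_neg at hgγ
          obtain ⟨C, hC1, hC2⟩ := hh (g γ) hgξ _
            (IH (g γ) hgξ ((hgξ.le).trans hξα) hgγ)
          exact ⟨C, hC1, fun _ β hβ _ => hC2 β hβ⟩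
      · exact ⟨Set.Iio omega1, isClub_Iio, fun hcontra => absurd hcontra hgξ⟩
    choose C hC1 hC2 using hCex
    set D : Ordinal.{0} → Set Ordinal.{0} :=
      fun γ => if hγ : γ < omega1 then C γ hγ else Set.Iio omega1 with hD
    have hDclub : ∀ γ, γ < omega1 → IsClub (D γ) := by
      intro γ hγ
      rw [hD]
      simp only [dif_pos hγ]
      exact hC1 γ hγ
    refine ⟨_, isClub_diag D hDclub, ?_⟩
    intro β hβ
    refine OT_le_of_forall (hbound β ξ hβ.1) ?_
    intro ζ hζmem
    obtain ⟨⟨γ, hγβ, rfl⟩, hζξ⟩ := hζmem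
    have hγω : γ < omega1 := hγβ.trans hβ.1
    have hβC : β ∈ C γ hγω := by
      have hmem := hβ.2 γ hγβ
      rw [hD] at hmem
      simpa only [dif_pos hγω] using hmem
    have hres := hC2 γ hγω hζξ β hβC hβ.1
    have hset : g '' Set.Iio β ∩ Set.Iio ξ ∩ Set.Iio (g γ) =
        g '' Set.Iio β ∩ Set.Iio (g γ) := by
      ext y
      constructor
      · rintro ⟨⟨hy1, _⟩, hy3⟩
        exact ⟨hy1, hy3⟩
      · rintro ⟨hy1, hy2⟩
        exact ⟨⟨hy1, Set.mem_Iio.2 ((Set.mem_Iio.1 hy2).trans hζξ)⟩, hy2⟩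
    rw [hset]
    exact hres

end

end Aux

theorem stmt_7 (α : Ordinal.{0}) (h1 : omega1 ≤ α) (h2 : α < omega2)
    (g : Ordinal.{0} → Ordinal.{0})
    (hmaps : ∀ β, β < omega1 → g β < α)
    (hinj : ∀ β β', β < omega1 → β' < omega1 → g β = g β' → β = β')
    (hsurj : ∀ ξ, ξ < α → ∃ β, β < omega1 ∧ g β = ξ)
    (f : Ordinal.{0} → Ordinal.{0})
    (hf : ∀ β, β < omega1 → IsOtypOf (f β) (g '' Set.Iio β)) :
    Canonical α f := by
  have hmain := main_canonical α h1 g hmaps hsurj α le_rfl h1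
  refine canonical_congr ?_ hmain
  refine ⟨Set.Iio omega1, isClub_Iio, ?_⟩
  intro β hβ
  have himg : g '' Set.Iio β ⊆ Set.Iio α := by
    rintro x ⟨γ, hγ, rfl⟩
    exact hmaps γ (hγ.trans hβ)
  have hset : g '' Set.Iio β ∩ Set.Iio α = g '' Set.Iio β :=
    Set.inter_eq_self_of_subset_left himg
  show OT (g '' Set.Iio β ∩ Set.Iio α) = f β
  rw [hset]
  exact OT_eq_of_isOtypOf (hf β hβ) himg

end P746
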